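/- Let λ = (λ_1, …, λ_r) and τ = (τ_1, …, τ_s) be partitions of n. Then ∑_{i,j} max(0, λ_i + τ_j − n) ≤ n. Consequently, the multiset ⟨λ_i + τ_j − n⟩_n, consisting of all positive values λ_i + τ_j − n together with enough 1's to sum to n, is a well-defined partition of n. -/
import Mathlib

lemma stmt17_aux (n x : ℕ) (hx : x ≤ n) (t : Multiset ℕ) :
    (t.map (fun y => x + y - n)).sum ≤ x + t.sum - n := by
  induction t using Multiset.induction_on with
  | empty => simp
  | cons y t ih => simp only [Multiset.map_cons, Multiset.sum_cons] at *; omega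

/-- For partitions `lam` and `tau` of `n`, one has `∑_{i,j} max(0, λᵢ + τⱼ - n) ≤ n`,
so the multiset `⟨λᵢ + τⱼ - n⟩_n` (positive values together with enough `1`'s to sum
to `n`) is a well-defined partition of `n`. -/
theorem stmt17 (n : ℕ) (lam tau : Multiset ℕ)
    (hlpos : ∀ x ∈ lam, 0 < x) (hlsum : lam.sum = n)
    (htpos : ∀ x ∈ tau, 0 < x) (htsum : tau.sum = n) :
    (lam.bind (fun x => tau.map (fun y => x + y - n))).sum ≤ n ∧
      (let c := (lam.bind (fun x => tau.map (fun y => x + y - n))).filter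
          (fun z => 0 < z)
       let mu := c + Multiset.replicate (n - c.sum) 1
       (∀ x ∈ mu, 0 < x) ∧ mu.sum = n) := by
  have hbound : (lam.bind (fun x => tau.map (fun y => x + y - n))).sum ≤ n := by
    rw [Multiset.sum_bind]
    calc (lam.map (fun x => (tau.map (fun y => x + y - n)).sum)).sum
        ≤ (lam.map (fun x => x)).sum := by
          apply Multiset.sum_map_le_sum_map
          intro x hx
          have hxn : x ≤ n := hlsum ▸ Multiset.single_le_sum (fun _ _ => Nat.zero_le _) x hx
          have := stmt17_aux n x hxn tau
          rw [htsum] at this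
          omega
      _ = n := by simp [hlsum]
  refine ⟨hbound, ?_, ?_⟩
  · intro x hx
    rcases Multiset.mem_add.1 hx with h | h
    · exact (Multiset.mem_filter.1 h).2
    · rw [Multiset.eq_of_mem_replicate h]; norm_num
  · have hcle : ((lam.bind (fun x => tau.map (fun y => x + y - n))).filter
        (fun z => 0 < z)).sum ≤ n := by
      obtain ⟨u, hu⟩ := Multiset.le_iff_exists_add.1
        (Multiset.filter_le (fun z => 0 < z) (lam.bind (fun x => tau.map (fun y => x + y - n))))
      rw [hu, Multiset.sum_add] at hbound
      omega
    simp only [Multiset.sum_add, Multiset.sum_replicate, smul_eq_mul, mul_one]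
    omega
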